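/- Let q be prime. The Kloosterman sum for the paramodular group Γ_pa(q) attached to the Weyl element w = s₁s₂s₁ and modulus c = (q,q) with trivial characters equals q²: the Kloosterman set X_{Γ_pa(q)}((q,q)*w) = U(ℤ)\[U(ℚ)w c* U_w(ℚ) ∩ Γ_pa(q)]/U_w(ℤ) has exactly q² elements, all of which are annihilated trivially by the characters (the free parameters x₂ mod qℤ and y₂ mod q are not seen by the characters). -/

import Mathlib

open Matrix

abbrev M4 := Matrix (Fin 4) (Fin 4) ℚ

def Jmat : M4 := !![0,0,1,0; 0,0,0,1; -1,0,0,0; 0,-1,0,0]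

/-- `Sp₄(ℚ)`: rational matrices with `gᵀ J g = J`. -/
def Sp4Q : Set M4 := {g | gᵀ * Jmat * g = Jmat}

/-- The integrality scale of the paramodular pattern: the `(i,j)` entry of a
paramodular matrix lies in `paraScale q i j • ℤ`.  (0-based indices: the
`(1,3)`-entry of the paper is `(0,2)` here, etc.) -/
def paraScale (q : ℕ) (i j : Fin 4) : ℚ :=
  if i = 0 ∧ j = 2 then (q : ℚ)⁻¹
  else if (i = 1 ∧ j = 0) ∨ (i = 2 ∧ j = 0) ∨ (i = 2 ∧ j = 1) ∨ (i = 2 ∧ j = 3) ∨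
      (i = 3 ∧ j = 0) then (q : ℚ)
  else 1

/-- The paramodular group `Γ_pa(q)` of level `q`. -/
def Para (q : ℕ) : Set M4 :=
  {g | g ∈ Sp4Q ∧ ∀ i j, ∃ n : ℤ, g i j = paraScale q i j * n}


def nMat (x : ℚ) : M4 := !![1,x,0,0; 0,1,0,0; 0,0,1,0; 0,0,-x,1]

def sMat (a b c : ℚ) : M4 := !![1,0,a,b; 0,1,b,c; 0,0,1,0; 0,0,0,1]

/-- A general element `n(x)·s(T)` of the unipotent radical `U`. -/
def uMat (x a b c : ℚ) : M4 := nMat x * sMat a b c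

/-- `U(ℚ)`, the unipotent radical of the Borel of `Sp₄` over `ℚ`. -/
def UQ : Set M4 := {g | ∃ x a b c : ℚ, g = uMat x a b c}

/-- `U(ℤ)`, the integral points of the unipotent radical. -/
def UZ : Set M4 := {g | ∃ x a b c : ℤ, g = uMat x a b c}

/-- An element of `U_w(ℚ)` for `w = s₁s₂s₁`: `n(x)·s([[a,b],[b,0]])`. -/
def uwMat (x a b : ℚ) : M4 := nMat x * sMat a b 0

/-- `U_w(ℤ)` for `w = s₁s₂s₁`. -/
def UwZ : Set M4 := {g | ∃ x a b : ℤ, g = uwMat x a b}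

/-- The product `w·c*` for `w = s₁s₂s₁`, `c = (q,q)`. -/
def wcMat (q : ℕ) : M4 :=
  !![0, 0, -(q : ℚ)⁻¹, 0; 0, -1, 0, 0; (q : ℚ), 0, 0, 0; 0, 0, 0, -1]

/-- The Bruhat cell `U(ℚ)·w·c*·U_w(ℚ) ∩ Γ_pa(q)` for `w = s₁s₂s₁`, `c = (q,q)`. -/
def cell (q : ℕ) : Set M4 :=
  {g | (∃ x a b c x' a' b' : ℚ, g = uMat x a b c * wcMat q * uwMat x' a' b') ∧ g ∈ Para q}

lemma uMat_eq (x a b c : ℚ) :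
    uMat x a b c = !![1,x,a+x*b,b+x*c; 0,1,b,c; 0,0,1,0; 0,0,-x,1] := by
  ext i j
  fin_cases i <;> fin_cases j <;>
    simp [uMat, nMat, sMat, Matrix.mul_apply, Fin.sum_univ_four, Matrix.vecHead, Matrix.vecTail]

lemma uwMat_eq (x a b : ℚ) :
    uwMat x a b = !![1,x,a+x*b,b; 0,1,b,0; 0,0,1,0; 0,0,-x,1] := by
  ext i j
  fin_cases i <;> fin_cases j <;>
    simp [uwMat, nMat, sMat, Matrix.mul_apply, Fin.sum_univ_four, Matrix.vecHead, Matrix.vecTail]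

lemma uu_eq (x a b c A : ℚ) : uMat x (a-A) b c * uMat 0 A 0 0 = uMat x a b c := by
  rw [uMat_eq, uMat_eq, uMat_eq]
  ext i j
  fin_cases i <;> fin_cases j <;>
    (simp [Matrix.mul_apply, Fin.sum_univ_four, Matrix.vecHead, Matrix.vecTail]; try ring)

lemma ww_eq (x' a' b' A' : ℚ) : uwMat 0 A' 0 * uwMat x' (a'-A') b' = uwMat x' a' b' := by
  rw [uwMat_eq, uwMat_eq, uwMat_eq]
  ext i j
  fin_cases i <;> fin_cases j <;>
    (simp [Matrix.mul_apply, Fin.sum_univ_four, Matrix.vecHead, Matrix.vecTail]; try ring)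

lemma decomp (q : ℕ) (x a b c x' a' b' A A' : ℚ) :
    uMat x a b c * wcMat q * uwMat x' a' b' =
    uMat x (a-A) b c * (uMat 0 A 0 0 * wcMat q * uwMat 0 A' 0) * uwMat x' (a'-A') b' := by
  rw [← uu_eq x a b c A, ← ww_eq x' a' b' A']
  simp only [Matrix.mul_assoc]

lemma rep_eq (q : ℕ) (hq0 : (q:ℚ) ≠ 0) (S T : ℚ) :
    uMat 0 (S/q) 0 0 * wcMat q * uwMat 0 (T/q) 0 =
    !![S, 0, (S*T - 1)/q, 0; 0,-1,0,0; (q:ℚ),0,T,0; 0,0,0,-1] := by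
  rw [uMat_eq, uwMat_eq]
  ext i j
  fin_cases i <;> fin_cases j <;>
    (simp [wcMat, Matrix.mul_apply, Fin.sum_univ_four, Matrix.vecHead, Matrix.vecTail]; try ring) <;>
    (field_simp <;> ring)

lemma rep_sp (q : ℕ) (hq0 : (q:ℚ) ≠ 0) (S T : ℚ) :
    (!![S, 0, (S*T - 1)/q, 0; 0,-1,0,0; (q:ℚ),0,T,0; 0,0,0,-1] : M4) ∈ Sp4Q := by
  show _ = _
  ext i j
  fin_cases i <;> fin_cases j <;>
    (simp [Jmat, Matrix.mul_apply, Matrix.transpose_apply, Fin.sum_univ_four, Matrix.vecHead, Matrix.vecTail]; try ring) <;>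
    (field_simp <;> ring)

lemma uwc_eq (q : ℕ) (x a b c : ℚ) :
    uMat x a b c * wcMat q =
    !![q*(a+x*b), -x, -(q:ℚ)⁻¹, -(b+x*c);
       q*b, -1, 0, -c;
       (q:ℚ), 0, 0, 0;
       -(q*x), 0, 0, -1] := by
  rw [uMat_eq]
  ext i j
  fin_cases i <;> fin_cases j <;>
    (simp [wcMat, Matrix.mul_apply, Fin.sum_univ_four, Matrix.vecHead, Matrix.vecTail]; try ring)

lemma prod_eq (q : ℕ) (x a b c x' a' b' : ℚ) :
    uMat x a b c * wcMat q * uwMat x' a' b' =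
    !![q*(a+x*b), q*(a+x*b)*x' - x,
         q*(a+x*b)*(a'+x'*b') - x*b' - (q:ℚ)⁻¹ + (b+x*c)*x', q*(a+x*b)*b' - (b+x*c);
       q*b, q*b*x' - 1, q*b*(a'+x'*b') - b' + c*x', q*b*b' - c;
       (q:ℚ), q*x', q*(a'+x'*b'), q*b';
       -(q*x), -(q*x*x'), -(q*x)*(a'+x'*b') + x', -(q*x*b') - 1] := by
  rw [uwc_eq, uwMat_eq]
  ext i j
  fin_cases i <;> fin_cases j <;>
    (simp [Matrix.mul_apply, Fin.sum_univ_four, Matrix.vecHead, Matrix.vecTail]; try ring)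

lemma para_params (q : ℕ) (hq0 : (q:ℚ) ≠ 0) (x a b c x' a' b' : ℚ)
    (h : uMat x a b c * wcMat q * uwMat x' a' b' ∈ Para q) :
    ∃ X B C X' B' N N' : ℤ, x = X ∧ b = B ∧ c = C ∧ x' = X' ∧ b' = B' ∧
      (q:ℚ)*a = N ∧ (q:ℚ)*a' = N' := by
  obtain ⟨-, hent⟩ := h
  have e10 := hent 1 0
  have e30 := hent 3 0
  have e21 := hent 2 1
  have e23 := hent 2 3
  have e13 := hent 1 3
  have e00 := hent 0 0
  have e22 := hent 2 2
  rw [prod_eq] at e10 e30 e21 e23 e13 e00 e22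
  simp [paraScale] at e10 e30 e21 e23 e13 e00 e22
  have hqn : q ≠ 0 := by exact_mod_cast hq0
  obtain ⟨B, hB⟩ := e10
  obtain ⟨X0, hX0⟩ := e30
  obtain ⟨X', hX'⟩ := e21
  obtain ⟨B', hB'⟩ := e23
  obtain ⟨n13, h13⟩ := e13
  obtain ⟨n00, h00⟩ := e00
  obtain ⟨n22, h22⟩ := e22
  have hb : b = B := hB.resolve_right hqn
  have hx : x = -X0 := by
    have h := mul_left_cancel₀ hq0 (by linarith [hX0] : (q:ℚ) * (-x) = q * X0)
    push_cast
    linarith [h]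
  have hx' : x' = X' := hX'.resolve_right hqn
  have hb' : b' = B' := hB'.resolve_right hqn
  refine ⟨-X0, B, (q*B*B' - n13 : ℤ), X', B', (n00 - q*(-X0)*B : ℤ), (n22 - q*X'*B' : ℤ),
    hx, hb, ?_, hx', hb', ?_, ?_⟩
  · push_cast
    rw [← hb, ← hb']
    linarith [h13]
  · push_cast
    rw [← hb, ← hx] at *
    nlinarith [h00]
  · push_cast
    rw [← hb', ← hx'] at *
    nlinarith [h22]

lemma rep_para (q : ℕ) (hq0 : (q:ℚ) ≠ 0) (S T : ℤ) :
    (!![(S:ℚ), 0, ((S:ℚ)*T - 1)/q, 0; 0,-1,0,0; (q:ℚ),0,(T:ℚ),0; 0,0,0,-1] : M4) ∈ Para q := by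
  refine ⟨rep_sp q hq0 S T, ?_⟩
  intro i j
  fin_cases i <;> fin_cases j
  · exact ⟨S, by norm_num [paraScale, Fin.ext_iff]⟩
  · exact ⟨0, by norm_num [paraScale, Fin.ext_iff]⟩
  · exact ⟨S*T-1, by norm_num [paraScale, Fin.ext_iff]; push_cast; field_simp⟩
  · exact ⟨0, by norm_num [paraScale, Fin.ext_iff]⟩
  · exact ⟨0, by norm_num [paraScale, Fin.ext_iff]⟩
  · exact ⟨-1, by norm_num [paraScale, Fin.ext_iff]⟩
  · exact ⟨0, by norm_num [paraScale, Fin.ext_iff]⟩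
  · exact ⟨0, by norm_num [paraScale, Fin.ext_iff]⟩
  · exact ⟨1, by norm_num [paraScale, Fin.ext_iff]⟩
  · exact ⟨0, by norm_num [paraScale, Fin.ext_iff]⟩
  · exact ⟨T, by norm_num [paraScale, Fin.ext_iff]⟩
  · exact ⟨0, by norm_num [paraScale, Fin.ext_iff]⟩
  · exact ⟨0, by norm_num [paraScale, Fin.ext_iff]⟩
  · exact ⟨0, by norm_num [paraScale, Fin.ext_iff]⟩
  · exact ⟨0, by norm_num [paraScale, Fin.ext_iff]⟩
  · exact ⟨-1, by norm_num [paraScale, Fin.ext_iff]⟩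

lemma inv_entries (q : ℕ) (u v h : M4) (hu : ∃ x a b c : ℤ, u = uMat x a b c)
    (hv : ∃ x a b : ℤ, v = uwMat x a b) (hh : h ∈ Para q) :
    (∃ k : ℤ, (u * h * v) 0 0 = h 0 0 + (q:ℚ) * k) ∧
    (∃ k : ℤ, (u * h * v) 2 2 = h 2 2 + (q:ℚ) * k) := by
  obtain ⟨m, α, β, γ, rfl⟩ := hu
  obtain ⟨m', α', β', rfl⟩ := hv
  obtain ⟨-, hent⟩ := hh
  have e10 := hent 1 0
  have e20 := hent 2 0
  have e30 := hent 3 0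
  have e21 := hent 2 1
  have e23 := hent 2 3
  simp [paraScale] at e10 e20 e30 e21 e23
  obtain ⟨n10, h10⟩ := e10
  obtain ⟨n20, h20⟩ := e20
  obtain ⟨n30, h30⟩ := e30
  obtain ⟨n21, h21⟩ := e21
  obtain ⟨n23, h23⟩ := e23
  rw [uMat_eq, uwMat_eq]
  constructor
  · refine ⟨m*n10 + (α+m*β)*n20 + (β+m*γ)*n30, ?_⟩
    have expand : (!![1,(m:ℚ),α+m*β,β+m*γ; 0,1,(β:ℚ),(γ:ℚ); 0,0,1,0; 0,0,-(m:ℚ),1] * h *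
        !![1,(m':ℚ),α'+m'*β',(β':ℚ); 0,1,(β':ℚ),0; 0,0,1,0; 0,0,-(m':ℚ),1]) 0 0 =
        h 0 0 + m * h 1 0 + ((α:ℚ)+m*β) * h 2 0 + ((β:ℚ)+m*γ) * h 3 0 := by
      simp [Matrix.mul_apply, Fin.sum_univ_four, Matrix.vecHead, Matrix.vecTail,
        Matrix.vecMul, dotProduct]
      try ring
    rw [expand, h10, h20, h30]
    push_cast
    ring
  · refine ⟨n20*(α'+m'*β') + n21*β' - n23*m', ?_⟩
    have expand : (!![1,(m:ℚ),α+m*β,β+m*γ; 0,1,(β:ℚ),(γ:ℚ); 0,0,1,0; 0,0,-(m:ℚ),1] * h *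
        !![1,(m':ℚ),α'+m'*β',(β':ℚ); 0,1,(β':ℚ),0; 0,0,1,0; 0,0,-(m':ℚ),1]) 2 2 =
        h 2 0 * ((α':ℚ)+m'*β') + h 2 1 * β' + h 2 2 - h 2 3 * m' := by
      simp [Matrix.mul_apply, Fin.sum_univ_four, Matrix.vecHead, Matrix.vecTail,
        Matrix.vecMul, dotProduct]
      try ring
    rw [expand, h20, h21, h23]
    push_cast
    ring


set_option maxHeartbeats 1000000 in
open Complex in
/-- For prime `q`, the Kloosterman set
`X_{Γ_pa(q)}((q,q)*s₁s₂s₁) = U(ℤ)\[U(ℚ)·w·c*·U_w(ℚ) ∩ Γ_pa(q)]/U_w(ℤ)`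
has exactly `q²` elements, and the characters `ψ^{(M)}, ψ^{(N)}` are trivial on
every decomposition (so `Kl_{Γ_pa(q),s₁s₂s₁}((q,q);1,N) = q²`). -/
theorem stmt_7 (q : ℕ) (hq : q.Prime) :
    Nat.card (Quot (fun (g h : {g : M4 // g ∈ cell q}) =>
      ∃ u ∈ UZ, ∃ v ∈ UwZ, (g : M4) = u * (h : M4) * v)) = q ^ 2 ∧
    (∀ x a b c x' a' b' : ℚ,
      uMat x a b c * wcMat q * uwMat x' a' b' ∈ Para q →
        Complex.exp (2 * Real.pi * Complex.I * ((x + c : ℚ) : ℂ)) = 1 ∧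
        Complex.exp (2 * Real.pi * Complex.I * ((x' : ℚ) : ℂ)) = 1) := by
  have hqn : q ≠ 0 := hq.ne_zero
  have hq0 : (q:ℚ) ≠ 0 := Nat.cast_ne_zero.mpr hqn
  haveI : NeZero q := ⟨hqn⟩
  constructor
  · -- the counting statement
    set r : {g : M4 // g ∈ cell q} → {g : M4 // g ∈ cell q} → Prop :=
      fun g h => ∃ u ∈ UZ, ∃ v ∈ UwZ, (g : M4) = u * (h : M4) * v with hrdef
    let f : {g : M4 // g ∈ cell q} → ZMod q × ZMod q :=
      fun g => (((g.1 0 0).num : ZMod q), ((g.1 2 2).num : ZMod q))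
    have repcell : ∀ p : ZMod q × ZMod q,
        uMat 0 ((p.1.val : ℚ)/q) 0 0 * wcMat q * uwMat 0 ((p.2.val : ℚ)/q) 0 ∈ cell q := by
      intro p
      refine ⟨⟨0, (p.1.val : ℚ)/q, 0, 0, 0, (p.2.val : ℚ)/q, 0, rfl⟩, ?_⟩
      rw [rep_eq q hq0]
      have h2 := rep_para q hq0 (p.1.val : ℤ) (p.2.val : ℤ)
      push_cast at h2 ⊢
      exact h2
    let Rep : ZMod q × ZMod q → {g : M4 // g ∈ cell q} := fun p => ⟨_, repcell p⟩
    have entry_rep : ∀ (p : ZMod q × ZMod q),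
        (Rep p).1 0 0 = (p.1.val : ℚ) ∧ (Rep p).1 2 2 = (p.2.val : ℚ) := by
      intro p
      have : (Rep p).1 = !![(p.1.val:ℚ), 0, ((p.1.val:ℚ)*(p.2.val:ℚ) - 1)/q, 0;
          0,-1,0,0; (q:ℚ),0,(p.2.val:ℚ),0; 0,0,0,-1] := rep_eq q hq0 _ _
      rw [this]
      constructor <;> norm_num <;> rfl
    have key1 : ∀ a b, r a b → f a = f b := by
      rintro a b ⟨u, hu, v, hv, heq⟩
      obtain ⟨⟨k, hk⟩, ⟨k', hk'⟩⟩ := inv_entries q u v b.1 hu hv b.2.2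
      obtain ⟨n00, h00⟩ := b.2.2.2 0 0
      obtain ⟨n22, h22⟩ := b.2.2.2 2 2
      rw [show paraScale q 0 0 = 1 from rfl, one_mul] at h00
      rw [show paraScale q 2 2 = 1 from rfl, one_mul] at h22
      have ha00 : a.1 0 0 = ((n00 + q*k : ℤ):ℚ) := by
        rw [heq, hk, h00]; push_cast; ring
      have ha22 : a.1 2 2 = ((n22 + q*k' : ℤ):ℚ) := by
        rw [heq, hk', h22]; push_cast; ring
      show (((a.1 0 0).num : ZMod q), ((a.1 2 2).num : ZMod q))
          = (((b.1 0 0).num : ZMod q), ((b.1 2 2).num : ZMod q))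
      rw [ha00, ha22, h00, h22, Rat.num_intCast, Rat.num_intCast,
        Rat.num_intCast, Rat.num_intCast]
      rw [Prod.mk.injEq]
      constructor <;> · push_cast [ZMod.natCast_self]; ring
    have key3 : ∀ p, f (Rep p) = p := by
      intro p
      obtain ⟨e1, e2⟩ := entry_rep p
      show ((((Rep p).1 0 0).num : ZMod q), (((Rep p).1 2 2).num : ZMod q)) = p
      rw [e1, e2, Rat.num_natCast, Rat.num_natCast]
      ext <;> simp [ZMod.natCast_val, ZMod.cast_id]
    have key2 : ∀ g : {g : M4 // g ∈ cell q}, r g (Rep (f g)) := by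
      intro g
      obtain ⟨⟨x,a,b,c,x',a',b', hgeq⟩, hpara⟩ := g.2
      obtain ⟨X,B,C,X',B',N,N', hx,hb,hc,hx',hb',hN,hN'⟩ :=
        para_params q hq0 x a b c x' a' b' (hgeq ▸ hpara)
      have h00 : g.1 0 0 = ((N + q*X*B : ℤ):ℚ) := by
        rw [hgeq, prod_eq]
        show (q:ℚ)*(a+x*b) = _
        rw [hx, hb]
        push_cast
        linear_combination hN
      have h22 : g.1 2 2 = ((N' + q*X'*B' : ℤ):ℚ) := by
        rw [hgeq, prod_eq]
        show (q:ℚ)*(a'+x'*b') = _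
        rw [hx', hb']
        push_cast
        linear_combination hN'
      have hf00 : (f g).1 = ((N + q*X*B : ℤ) : ZMod q) := by
        show (((g.1 0 0).num : ZMod q)) = _
        rw [h00, Rat.num_intCast]
      have hf22 : (f g).2 = ((N' + q*X'*B' : ℤ) : ZMod q) := by
        show (((g.1 2 2).num : ZMod q)) = _
        rw [h22, Rat.num_intCast]
      have h1 : (((f g).1.val : ℤ) : ZMod q) = (f g).1 := by
        rw [Int.cast_natCast, ZMod.natCast_val, ZMod.cast_id]
      have h2 : (((f g).2.val : ℤ) : ZMod q) = (f g).2 := by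
        rw [Int.cast_natCast, ZMod.natCast_val, ZMod.cast_id]
      obtain ⟨k, hk⟩ : (q:ℤ) ∣ (N + q*X*B : ℤ) - ((f g).1.val : ℤ) := by
        rw [← ZMod.intCast_zmod_eq_zero_iff_dvd, Int.cast_sub, h1, hf00, sub_self]
      obtain ⟨k', hk'⟩ : (q:ℤ) ∣ (N' + q*X'*B' : ℤ) - ((f g).2.val : ℤ) := by
        rw [← ZMod.intCast_zmod_eq_zero_iff_dvd, Int.cast_sub, h2, hf22, sub_self]
      obtain ⟨V, hV⟩ : ∃ V:ℕ, (f g).1.val = V := ⟨_, rfl⟩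
      obtain ⟨W, hW⟩ : ∃ W:ℕ, (f g).2.val = W := ⟨_, rfl⟩
      rw [hV] at hk
      rw [hW] at hk'
      have hkq : ((N:ℚ) + q*X*B) - (V:ℚ) = q*k := by exact_mod_cast hk
      have hkq' : ((N':ℚ) + q*X'*B') - (W:ℚ) = q*k' := by exact_mod_cast hk'
      have hSa : a - (V:ℚ)/q = ((k - X*B : ℤ):ℚ) := by
        field_simp
        push_cast
        linear_combination hN + hkq
      have hSa' : a' - (W:ℚ)/q = ((k' - X'*B' : ℤ):ℚ) := by
        field_simp
        push_cast
        linear_combination hN' + hkq'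
      refine ⟨uMat (X:ℚ) ((k - X*B : ℤ):ℚ) (B:ℚ) (C:ℚ), ⟨X, k - X*B, B, C, rfl⟩,
              uwMat (X':ℚ) ((k' - X'*B' : ℤ):ℚ) (B':ℚ), ⟨X', k' - X'*B', B', rfl⟩, ?_⟩
      show g.1 = _ * (Rep (f g)).1 * _
      have hmid : (Rep (f g)).1 =
          uMat 0 ((V:ℚ)/q) 0 0 * wcMat q * uwMat 0 ((W:ℚ)/q) 0 := by
        rw [← hV, ← hW]
      rw [hgeq, hmid, decomp q x a b c x' a' b' ((V:ℚ)/q) ((W:ℚ)/q),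
        hSa, hSa', hx, hb, hc, hx', hb']
    have e : Quot r ≃ ZMod q × ZMod q :=
      { toFun := Quot.lift f key1
        invFun := fun p => Quot.mk r (Rep p)
        left_inv := by
          intro z
          induction z using Quot.ind
          next g => exact (Quot.sound (key2 g)).symm
        right_inv := key3 }
    rw [Nat.card_congr e, Nat.card_prod, Nat.card_zmod, sq]
  · intro x a b c x' a' b' h
    obtain ⟨X,B,C,X',B',N,N', hx,hb,hc,hx',hb',hN,hN'⟩ :=
      para_params q hq0 x a b c x' a' b' h
    constructor
    · rw [hx, hc]
      rw [show 2 * (Real.pi:ℂ) * Complex.I * ((((X:ℚ) + (C:ℚ)):ℚ):ℂ)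
            = ((X + C : ℤ):ℂ) * (2 * Real.pi * Complex.I) by push_cast; ring]
      exact Complex.exp_int_mul_two_pi_mul_I _
    · rw [hx']
      rw [show 2 * (Real.pi:ℂ) * Complex.I * (((X':ℚ)):ℂ)
            = ((X' : ℤ):ℂ) * (2 * Real.pi * Complex.I) by push_cast; ring]
      exact Complex.exp_int_mul_two_pi_mul_I _
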